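/- Let G be a finite group and for each g ∈ G let α_g : G × G → ℂˣ satisfy the identity α_g(hk,l)·α_{lgl⁻¹}(h,k) = α_g(h,kl)·α_g(k,l). Then the multiplication (a ⊗ e(x))·(b ⊗ e(y)) = α_y(a,b) · (ab ⊗ e(b⁻¹xb)e(y)) on ℂ[G] ⊗ ℂ[G]* is associative. -/
import Mathlib


open scoped Classical in
/-- The multiplication of the twisted quantum double `D_α(G)`, on the underlying space
`ℂ[G] ⊗ ℂ[G]*` realized as functions `G × G → ℂ` (basis element `a ⊗ e(x)` is the delta
function at `(a,x)`): on basis elements,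
`(a ⊗ e(x))·(b ⊗ e(y)) = α_y(a,b) (ab ⊗ e(b⁻¹xb)e(y))`, extended bilinearly. -/
noncomputable def doubleMul {G : Type} [Group G] [Fintype G]
    (w : G → G → G → ℂˣ)  -- `w y a b = α_y(a,b)`
    (f₁ f₂ : G × G → ℂ) : G × G → ℂ :=
  fun q => ∑ u : G, ∑ v : G,
    if u * v = q.1 then
      f₁ (u, v * q.2 * v⁻¹) * f₂ (v, q.2) * (w q.2 u v : ℂ)
    else 0

/-- If the family `α_g : G × G → ℂˣ` satisfies
`α_g(hk,l)·α_{lgl⁻¹}(h,k) = α_g(h,kl)·α_g(k,l)`, then the multiplication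
`(a ⊗ e(x))·(b ⊗ e(y)) = α_y(a,b)(ab ⊗ e(b⁻¹xb)e(y))` on `ℂ[G] ⊗ ℂ[G]*` is
associative. -/
theorem doubleMul_assoc
    (G : Type) [Group G] [Fintype G]
    (w : G → G → G → ℂˣ)
    (hid : ∀ g h k l : G,
      w g (h * k) l * w (l * g * l⁻¹) h k = w g h (k * l) * w g k l) :
    ∀ f₁ f₂ f₃ : G × G → ℂ,
      doubleMul w (doubleMul w f₁ f₂) f₃ = doubleMul w f₁ (doubleMul w f₂ f₃) := by
  classical
  -- Collapse the delta in the second summation variable: `u * v = p` iff `v = u⁻¹ * p`.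
  have collapse : ∀ (f g : G × G → ℂ) (p x : G),
      doubleMul w f g (p, x) =
        ∑ u : G, f (u, (u⁻¹ * p) * x * (u⁻¹ * p)⁻¹) * g (u⁻¹ * p, x)
          * (w x u (u⁻¹ * p) : ℂ) := by
    intro f g p x
    unfold doubleMul
    refine Finset.sum_congr rfl fun u _ => ?_
    simp only [← eq_inv_mul_iff_mul_eq, Finset.sum_ite_eq', Finset.mem_univ, if_true]
  intro f₁ f₂ f₃
  funext q
  obtain ⟨p, x⟩ := q
  simp only [collapse, Finset.sum_mul, Finset.mul_sum]
  rw [Finset.sum_comm]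
  refine Finset.sum_congr rfl fun a _ => ?_
  -- Reindex the inner sum on the left by `u = a * b`.
  rw [← Equiv.sum_comp (Equiv.mulLeft a)]
  refine Finset.sum_congr rfl fun b _ => ?_
  simp only [Equiv.coe_mulLeft, inv_mul_cancel_left]
  have e1 : (a * b)⁻¹ * p = b⁻¹ * (a⁻¹ * p) := by group
  rw [e1]
  have e2 : b * ((b⁻¹ * (a⁻¹ * p)) * x * (b⁻¹ * (a⁻¹ * p))⁻¹) * b⁻¹
      = (a⁻¹ * p) * x * (a⁻¹ * p)⁻¹ := by group
  rw [e2]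
  -- The twisted cocycle identity with `h = a`, `k = b`, `l = b⁻¹ a⁻¹ p`.
  have key := hid x a b (b⁻¹ * (a⁻¹ * p))
  have e3 : b * (b⁻¹ * (a⁻¹ * p)) = a⁻¹ * p := by group
  rw [e3] at key
  have key' : (w x (a * b) (b⁻¹ * (a⁻¹ * p)) : ℂ)
        * (w ((b⁻¹ * (a⁻¹ * p)) * x * (b⁻¹ * (a⁻¹ * p))⁻¹) a b : ℂ)
      = (w x a (a⁻¹ * p) : ℂ) * (w x b (b⁻¹ * (a⁻¹ * p)) : ℂ) := by
    exact_mod_cast congrArg Units.val key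
  linear_combination
    (f₁ (a, (a⁻¹ * p) * x * (a⁻¹ * p)⁻¹)
      * f₂ (b, (b⁻¹ * (a⁻¹ * p)) * x * (b⁻¹ * (a⁻¹ * p))⁻¹)
      * f₃ (b⁻¹ * (a⁻¹ * p), x)) * key'
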